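/- Let A, B be n×n positive semidefinite complex matrices and let t ∈ (1/2, 1). Then ‖A^t B^(1-t) + B^t A^(1-t)‖_F ≤ ‖A + B‖_F^(1/2) · ‖B^(1-t) A^(2t-1) B^(1-t) + A^(1-t) B^(2t-1) A^(1-t)‖_F^(1/2), where ‖·‖_F is the Frobenius norm. -/

import Mathlib

open scoped ComplexOrder

/-- The real power `A ^ r` of a (positive semidefinite) matrix, defined via the
continuous functional calculus (equivalently, via the spectral decomposition). -/
noncomputable def matRpow {n : ℕ} (A : Matrix (Fin n) (Fin n) ℂ) (r : ℝ) :
    Matrix (Fin n) (Fin n) ℂ :=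
  cfc (fun x : ℝ => x ^ r) A

/-- The Frobenius (Hilbert–Schmidt) norm `‖M‖_F = (∑_{i,j} |M_{ij}|²)^{1/2}`. -/
noncomputable def frobeniusNorm' {n : ℕ} (M : Matrix (Fin n) (Fin n) ℂ) : ℝ :=
  Real.sqrt (∑ i, ∑ j, ‖M i j‖ ^ 2)

section Helpers

open Matrix

variable {m m' k : Type*} [Fintype m] [Fintype m'] [Fintype k]

/-- Frobenius norm for general (possibly rectangular) matrices. -/
noncomputable def fnormAux (M : Matrix m m' ℂ) : ℝ :=
  Real.sqrt (∑ i, ∑ j, ‖M i j‖ ^ 2)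

lemma fnormAux_nonneg (M : Matrix m m' ℂ) : 0 ≤ fnormAux M := Real.sqrt_nonneg _

lemma trace_conjTranspose_mul_re (M : Matrix m m' ℂ) :
    (Matrix.trace (Mᴴ * M)).re = ∑ i, ∑ j, ‖M i j‖ ^ 2 := by
  rw [Matrix.trace]
  rw [Complex.re_sum]
  rw [Finset.sum_comm]
  refine Finset.sum_congr rfl fun i _ => ?_
  simp only [Matrix.diag_apply, Matrix.mul_apply, Matrix.conjTranspose_apply, Complex.re_sum]
  refine Finset.sum_congr rfl fun j _ => ?_
  rw [Complex.star_def, ← Complex.normSq_eq_conj_mul_self]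
  simp [Complex.normSq_eq_norm_sq, ← Complex.ofReal_pow]

lemma fnormAux_sq_eq (M : Matrix m m' ℂ) :
    fnormAux M ^ 2 = (Matrix.trace (Mᴴ * M)).re := by
  rw [trace_conjTranspose_mul_re, fnormAux, Real.sq_sqrt]
  positivity

/-- Cauchy–Schwarz for the Hilbert–Schmidt pairing. -/
lemma trace_mul_re_le (M : Matrix m m' ℂ) (N : Matrix m' m ℂ) :
    (Matrix.trace (M * N)).re ≤ fnormAux M * fnormAux N := by
  have h1 : (Matrix.trace (M * N)).re ≤ ∑ p : m × m', ‖M p.1 p.2‖ * ‖N p.2 p.1‖ := by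
    rw [Matrix.trace, Complex.re_sum]
    calc ∑ i, (Matrix.diag (M * N) i).re
        ≤ ∑ i, ∑ j, ‖M i j‖ * ‖N j i‖ := by
          refine Finset.sum_le_sum fun i _ => ?_
          simp only [Matrix.diag_apply, Matrix.mul_apply, Complex.re_sum]
          refine Finset.sum_le_sum fun j _ => ?_
          calc (M i j * N j i).re ≤ ‖M i j * N j i‖ := Complex.re_le_norm _
            _ = ‖M i j‖ * ‖N j i‖ := norm_mul _ _
      _ = ∑ p : m × m', ‖M p.1 p.2‖ * ‖N p.2 p.1‖ := by
          rw [← Finset.univ_product_univ, Finset.sum_product]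
  refine h1.trans ?_
  have h2 := Finset.sum_mul_sq_le_sq_mul_sq Finset.univ
    (fun p : m × m' => ‖M p.1 p.2‖) (fun p : m × m' => ‖N p.2 p.1‖)
  have h3 : ∑ p : m × m', ‖M p.1 p.2‖ * ‖N p.2 p.1‖ ≤
      Real.sqrt ((∑ p : m × m', ‖M p.1 p.2‖ ^ 2) * (∑ p : m × m', ‖N p.2 p.1‖ ^ 2)) := by
    have hnn : 0 ≤ ∑ p : m × m', ‖M p.1 p.2‖ * ‖N p.2 p.1‖ := by positivity
    calc ∑ p : m × m', ‖M p.1 p.2‖ * ‖N p.2 p.1‖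
        = Real.sqrt ((∑ p : m × m', ‖M p.1 p.2‖ * ‖N p.2 p.1‖) ^ 2) :=
          (Real.sqrt_sq hnn).symm
      _ ≤ _ := Real.sqrt_le_sqrt h2
  refine h3.trans_eq ?_
  rw [Real.sqrt_mul (by positivity)]
  congr 1
  · rw [fnormAux, ← Finset.univ_product_univ, Finset.sum_product]
  · rw [fnormAux, ← Finset.univ_product_univ, Finset.sum_product]
    rw [Finset.sum_comm]

lemma fnormAux_eq_sqrt (M : Matrix m m' ℂ) :
    fnormAux M = Real.sqrt ((Matrix.trace (Mᴴ * M)).re) := by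
  rw [fnormAux, trace_conjTranspose_mul_re]

lemma fnormAux_conjTranspose_mul_comm (M : Matrix m m' ℂ) :
    fnormAux (Mᴴ * M) = fnormAux (M * Mᴴ) := by
  rw [fnormAux_eq_sqrt, fnormAux_eq_sqrt]
  congr 2
  simp only [Matrix.conjTranspose_mul, Matrix.conjTranspose_conjTranspose]
  rw [Matrix.mul_assoc, Matrix.trace_mul_comm]
  simp only [Matrix.mul_assoc]

/-- The key Cauchy–Schwarz step: `‖C D‖² ≤ ‖C Cᴴ‖ ‖Dᴴ D‖`. -/
lemma fnormAux_mul_sq_le (C : Matrix m k ℂ) (D : Matrix k m ℂ) :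
    fnormAux (C * D) ^ 2 ≤ fnormAux (C * Cᴴ) * fnormAux (Dᴴ * D) := by
  have h1 : fnormAux (C * D) ^ 2 = (Matrix.trace ((Cᴴ * C) * (D * Dᴴ))).re := by
    rw [fnormAux_sq_eq, Matrix.conjTranspose_mul]
    rw [show Dᴴ * Cᴴ * (C * D) = Dᴴ * (Cᴴ * C * D) by simp only [Matrix.mul_assoc], Matrix.trace_mul_comm,
      show Cᴴ * C * D * Dᴴ = (Cᴴ * C) * (D * Dᴴ) by simp only [Matrix.mul_assoc]]
  rw [h1]
  calc (Matrix.trace ((Cᴴ * C) * (D * Dᴴ))).re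
      ≤ fnormAux (Cᴴ * C) * fnormAux (D * Dᴴ) := trace_mul_re_le _ _
    _ = fnormAux (C * Cᴴ) * fnormAux (Dᴴ * D) := by
        rw [fnormAux_conjTranspose_mul_comm C]
        have := fnormAux_conjTranspose_mul_comm Dᴴ
        rw [Matrix.conjTranspose_conjTranspose] at this
        rw [this]

end Helpers

section CfcFacts

variable {n : ℕ} {A : Matrix (Fin n) (Fin n) ℂ}

lemma matRpow_isHermitian (A : Matrix (Fin n) (Fin n) ℂ) (r : ℝ) :
    (matRpow A r).IsHermitian := by
  have h : IsSelfAdjoint (matRpow A r) := cfc_predicate _ A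
  exact h.star_eq

lemma continuous_rpow_const' {r : ℝ} (hr : 0 < r) : Continuous fun x : ℝ => x ^ r :=
  Real.continuous_rpow_const hr.le

lemma spectrum_nonneg_of_posSemidef (hA : A.PosSemidef) :
    ∀ x ∈ spectrum ℝ A, 0 ≤ x := by
  intro x hx
  rw [Matrix.IsHermitian.spectrum_real_eq_range_eigenvalues hA.1] at hx
  obtain ⟨i, rfl⟩ := hx
  exact hA.eigenvalues_nonneg i

lemma matRpow_mul_matRpow (hA : A.PosSemidef) {r s : ℝ} (hr : 0 < r) (hs : 0 < s) :
    matRpow A r * matRpow A s = matRpow A (r + s) := by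
  unfold matRpow
  rw [← cfc_mul _ _ A (continuous_rpow_const' hr).continuousOn
    (continuous_rpow_const' hs).continuousOn]
  refine cfc_congr fun x hx => ?_
  exact (Real.rpow_add' (spectrum_nonneg_of_posSemidef hA x hx) (by positivity)).symm

lemma matRpow_one (hA : A.PosSemidef) : matRpow A 1 = A := by
  unfold matRpow
  have : (fun x : ℝ => x ^ (1 : ℝ)) = fun x : ℝ => x := funext fun x => Real.rpow_one x
  rw [this]
  exact cfc_id' ℝ A hA.1.isSelfAdjoint

end CfcFacts

open Matrix

/-- **Bridge inequality, Frobenius-norm case.** For `n×n` positive semidefinite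
complex matrices `A, B` and `t ∈ (1/2, 1)`,
`‖A^t B^(1-t) + B^t A^(1-t)‖_F ≤ ‖A+B‖_F^(1/2) * ‖B^(1-t) A^(2t-1) B^(1-t) + A^(1-t) B^(2t-1) A^(1-t)‖_F^(1/2)`. -/
theorem bridge_inequality_frobenius {n : ℕ} (A B : Matrix (Fin n) (Fin n) ℂ)
    (hA : A.PosSemidef) (hB : B.PosSemidef) (t : ℝ)
    (ht : t ∈ Set.Ioo (1 / 2 : ℝ) 1) :
    frobeniusNorm' (matRpow A t * matRpow B (1 - t) + matRpow B t * matRpow A (1 - t)) ≤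
      frobeniusNorm' (A + B) ^ (1 / 2 : ℝ) *
        frobeniusNorm' (matRpow B (1 - t) * matRpow A (2 * t - 1) * matRpow B (1 - t) +
          matRpow A (1 - t) * matRpow B (2 * t - 1) * matRpow A (1 - t)) ^ (1 / 2 : ℝ) := by
  obtain ⟨ht1, ht2⟩ := ht
  have hhalf : (0 : ℝ) < 1 / 2 := by norm_num
  have htm : (0 : ℝ) < t - 1 / 2 := by linarith
  have h1t : (0 : ℝ) < 1 - t := by linarith
  set P := matRpow A (1 / 2) with hP
  set Q := matRpow B (1 / 2) with hQ
  set R := matRpow A (t - 1 / 2) with hR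
  set S := matRpow B (t - 1 / 2) with hS
  set U := matRpow A (1 - t) with hU
  set V := matRpow B (1 - t) with hV
  -- power identities
  have hPR : P * R = matRpow A t := by
    rw [hP, hR, matRpow_mul_matRpow hA hhalf htm]; norm_num
  have hQS : Q * S = matRpow B t := by
    rw [hQ, hS, matRpow_mul_matRpow hB hhalf htm]; norm_num
  have hPP : P * P = A := by
    rw [hP, matRpow_mul_matRpow hA hhalf hhalf]; norm_num [matRpow_one hA]
  have hQQ : Q * Q = B := by
    rw [hQ, matRpow_mul_matRpow hB hhalf hhalf]; norm_num [matRpow_one hB]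
  have hRR : R * R = matRpow A (2 * t - 1) := by
    rw [hR, matRpow_mul_matRpow hA htm htm]; ring_nf
  have hSS : S * S = matRpow B (2 * t - 1) := by
    rw [hS, matRpow_mul_matRpow hB htm htm]; ring_nf
  -- the block matrices
  set C : Matrix (Fin n) (Fin n ⊕ Fin n) ℂ := Matrix.fromCols P Q with hC
  set D : Matrix (Fin n ⊕ Fin n) (Fin n) ℂ := Matrix.fromRows (R * V) (S * U) with hD
  have hX : C * D = matRpow A t * matRpow B (1 - t) + matRpow B t * matRpow A (1 - t) := by
    rw [hC, hD, Matrix.fromCols_mul_fromRows, ← hV, ← hU, ← Matrix.mul_assoc,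
      ← Matrix.mul_assoc, hPR, hQS]
  have hCC : C * Cᴴ = A + B := by
    rw [hC, Matrix.conjTranspose_fromCols_eq_fromRows_conjTranspose,
      Matrix.fromCols_mul_fromRows, (matRpow_isHermitian A (1 / 2) : Pᴴ = P),
      (matRpow_isHermitian B (1 / 2) : Qᴴ = Q), hPP, hQQ]
  have hDD : Dᴴ * D = matRpow B (1 - t) * matRpow A (2 * t - 1) * matRpow B (1 - t) +
      matRpow A (1 - t) * matRpow B (2 * t - 1) * matRpow A (1 - t) := by
    rw [hD, Matrix.conjTranspose_fromRows_eq_fromCols_conjTranspose,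
      Matrix.fromCols_mul_fromRows, Matrix.conjTranspose_mul, Matrix.conjTranspose_mul,
      (matRpow_isHermitian A (t - 1 / 2) : Rᴴ = R),
      (matRpow_isHermitian B (t - 1 / 2) : Sᴴ = S),
      (matRpow_isHermitian A (1 - t) : Uᴴ = U),
      (matRpow_isHermitian B (1 - t) : Vᴴ = V), ← hV, ← hU]
    rw [show V * R * (R * V) = V * (R * R) * V by simp only [Matrix.mul_assoc],
      show U * S * (S * U) = U * (S * S) * U by simp only [Matrix.mul_assoc], hRR, hSS]
  have key := fnormAux_mul_sq_le C D
  rw [hX, hCC, hDD] at key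
  have hfrob : ∀ M : Matrix (Fin n) (Fin n) ℂ, frobeniusNorm' M = fnormAux M := fun _ => rfl
  rw [hfrob, hfrob, hfrob]
  set x := fnormAux (matRpow A t * matRpow B (1 - t) + matRpow B t * matRpow A (1 - t))
  set a := fnormAux (A + B)
  set b := fnormAux (matRpow B (1 - t) * matRpow A (2 * t - 1) * matRpow B (1 - t) +
    matRpow A (1 - t) * matRpow B (2 * t - 1) * matRpow A (1 - t))
  have hx : 0 ≤ x := fnormAux_nonneg _
  have ha : 0 ≤ a := fnormAux_nonneg _
  have hb : 0 ≤ b := fnormAux_nonneg _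
  calc x = Real.sqrt (x ^ 2) := (Real.sqrt_sq hx).symm
    _ ≤ Real.sqrt (a * b) := Real.sqrt_le_sqrt key
    _ = Real.sqrt a * Real.sqrt b := Real.sqrt_mul ha b
    _ = a ^ (1 / 2 : ℝ) * b ^ (1 / 2 : ℝ) := by
        rw [Real.sqrt_eq_rpow, Real.sqrt_eq_rpow]
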